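/- arXiv:1411.7573 — 4 statements merged into one kernel-verified Lean document; each statement's English description precedes it below -/
import Mathlib

section
/- The set of critical points of Hill's lunar Hamiltonian H is exactly {(3^{-1/3}, 0, 0, 3^{-1/3}), (-3^{-1/3}, 0, 0, -3^{-1/3})} (in coordinates (q₁,q₂,p₁,p₂)), and H takes the value -3^{4/3}/2 at both of these points. -/
/-- Hill's lunar Hamiltonian, on points `x = (q, p)` with `q, p ∈ ℝ²`:
`H(q,p) = (1/2)(p₁²+p₂²) - 1/√(q₁²+q₂²) - q₁² + (1/2)q₂² + p₁q₂ - p₂q₁`. -/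
noncomputable def HHLP (x : (ℝ × ℝ) × (ℝ × ℝ)) : ℝ :=
  (1/2) * (x.2.1 ^ 2 + x.2.2 ^ 2) - 1 / Real.sqrt (x.1.1 ^ 2 + x.1.2 ^ 2)
    - x.1.1 ^ 2 + (1/2) * x.1.2 ^ 2 + x.2.1 * x.1.2 - x.2.2 * x.1.1

noncomputable abbrev Pq1 : ((ℝ × ℝ) × (ℝ × ℝ)) →L[ℝ] ℝ :=
  (ContinuousLinearMap.fst ℝ ℝ ℝ).comp (ContinuousLinearMap.fst ℝ (ℝ × ℝ) (ℝ × ℝ))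
noncomputable abbrev Pq2 : ((ℝ × ℝ) × (ℝ × ℝ)) →L[ℝ] ℝ :=
  (ContinuousLinearMap.snd ℝ ℝ ℝ).comp (ContinuousLinearMap.fst ℝ (ℝ × ℝ) (ℝ × ℝ))
noncomputable abbrev Pp1 : ((ℝ × ℝ) × (ℝ × ℝ)) →L[ℝ] ℝ :=
  (ContinuousLinearMap.fst ℝ ℝ ℝ).comp (ContinuousLinearMap.snd ℝ (ℝ × ℝ) (ℝ × ℝ))
noncomputable abbrev Pp2 : ((ℝ × ℝ) × (ℝ × ℝ)) →L[ℝ] ℝ :=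
  (ContinuousLinearMap.snd ℝ ℝ ℝ).comp (ContinuousLinearMap.snd ℝ (ℝ × ℝ) (ℝ × ℝ))

noncomputable def DH (x : (ℝ × ℝ) × (ℝ × ℝ)) : ((ℝ × ℝ) × (ℝ × ℝ)) →L[ℝ] ℝ :=
  (x.1.1 * ((Real.sqrt (x.1.1 ^ 2 + x.1.2 ^ 2))⁻¹) ^ 3 - 2 * x.1.1 - x.2.2) • Pq1
  + (x.1.2 * ((Real.sqrt (x.1.1 ^ 2 + x.1.2 ^ 2))⁻¹) ^ 3 + x.1.2 + x.2.1) • Pq2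
  + (x.2.1 + x.1.2) • Pp1 + (x.2.2 - x.1.1) • Pp2

set_option maxHeartbeats 2000000 in
lemma key (x : (ℝ × ℝ) × (ℝ × ℝ)) (hx : x.1 ≠ 0) : HasFDerivAt HHLP (DH x) x := by
  have hor : x.1.1 ≠ 0 ∨ x.1.2 ≠ 0 := by
    by_contra h
    push_neg at h
    exact hx (Prod.ext h.1 h.2)
  have hs : (0:ℝ) < x.1.1 ^ 2 + x.1.2 ^ 2 := by
    rcases hor with h | h
    · positivity
    · positivity
  have hw : Real.sqrt (x.1.1 ^ 2 + x.1.2 ^ 2) ≠ 0 := by positivity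
  have hq1 : HasFDerivAt (fun y : (ℝ × ℝ) × (ℝ × ℝ) => y.1.1) Pq1 x :=
    hasFDerivAt_fst.comp x hasFDerivAt_fst
  have hq2 : HasFDerivAt (fun y : (ℝ × ℝ) × (ℝ × ℝ) => y.1.2) Pq2 x :=
    hasFDerivAt_snd.comp x hasFDerivAt_fst
  have hp1 : HasFDerivAt (fun y : (ℝ × ℝ) × (ℝ × ℝ) => y.2.1) Pp1 x :=
    hasFDerivAt_fst.comp x hasFDerivAt_snd
  have hp2 : HasFDerivAt (fun y : (ℝ × ℝ) × (ℝ × ℝ) => y.2.2) Pp2 x :=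
    hasFDerivAt_snd.comp x hasFDerivAt_snd
  have hS : HasFDerivAt (fun y : (ℝ × ℝ) × (ℝ × ℝ) => y.1.1 * y.1.1 + y.1.2 * y.1.2)
      ((x.1.1 • Pq1 + x.1.1 • Pq1) + (x.1.2 • Pq2 + x.1.2 • Pq2)) x := (hq1.mul hq1).add (hq2.mul hq2)
  have hsqrt : HasFDerivAt (fun y : (ℝ × ℝ) × (ℝ × ℝ) => Real.sqrt (y.1.1 * y.1.1 + y.1.2 * y.1.2))
      ((1 / (2 * Real.sqrt (x.1.1 ^ 2 + x.1.2 ^ 2))) • ((x.1.1 • Pq1 + x.1.1 • Pq1) + (x.1.2 • Pq2 + x.1.2 • Pq2))) x := by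
    have := (Real.hasDerivAt_sqrt (x := x.1.1 * x.1.1 + x.1.2 * x.1.2)
      (by rw [← pow_two, ← pow_two]; exact hs.ne')).comp_hasFDerivAt x hS
    simpa [pow_two, Function.comp_def] using this
  have hinv : HasFDerivAt
      (fun y : (ℝ × ℝ) × (ℝ × ℝ) => (Real.sqrt (y.1.1 * y.1.1 + y.1.2 * y.1.2))⁻¹)
      ((-(Real.sqrt (x.1.1 ^ 2 + x.1.2 ^ 2) ^ 2)⁻¹) • ((1 / (2 * Real.sqrt (x.1.1 ^ 2 + x.1.2 ^ 2))) •
        ((x.1.1 • Pq1 + x.1.1 • Pq1) + (x.1.2 • Pq2 + x.1.2 • Pq2)))) x := by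
    have h0 : Real.sqrt (x.1.1 * x.1.1 + x.1.2 * x.1.2) ≠ 0 := by
      rw [show x.1.1 * x.1.1 + x.1.2 * x.1.2 = x.1.1 ^ 2 + x.1.2 ^ 2 by ring]; exact hw
    have := (hasDerivAt_inv h0).comp_hasFDerivAt x hsqrt
    simp only [Function.comp_def] at this
    convert this using 2
    all_goals first | rfl | ring_nf
  have h1 : HasFDerivAt HHLP
      (((1/2:ℝ)) • ((x.2.1 • Pp1 + x.2.1 • Pp1) + (x.2.2 • Pp2 + x.2.2 • Pp2))
        - ((-(Real.sqrt (x.1.1 ^ 2 + x.1.2 ^ 2) ^ 2)⁻¹) • ((1 / (2 * Real.sqrt (x.1.1 ^ 2 + x.1.2 ^ 2))) •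
            ((x.1.1 • Pq1 + x.1.1 • Pq1) + (x.1.2 • Pq2 + x.1.2 • Pq2))))
        - (x.1.1 • Pq1 + x.1.1 • Pq1) + ((1/2:ℝ)) • (x.1.2 • Pq2 + x.1.2 • Pq2)
        + (x.2.1 • Pq2 + x.1.2 • Pp1) - (x.2.2 • Pq1 + x.1.1 • Pp2)) x := by
    have heq : HHLP = fun y : (ℝ × ℝ) × (ℝ × ℝ) =>
        (1/2) * (y.2.1 * y.2.1 + y.2.2 * y.2.2) - (Real.sqrt (y.1.1 * y.1.1 + y.1.2 * y.1.2))⁻¹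
          - y.1.1 * y.1.1 + (1/2) * (y.1.2 * y.1.2) + y.2.1 * y.1.2 - y.2.2 * y.1.1 := by
      funext y; unfold HHLP; rw [one_div]; ring_nf
    rw [heq]
    exact ((((((hp1.mul hp1).add (hp2.mul hp2)).const_mul (1/2:ℝ)).sub hinv).sub
      (hq1.mul hq1)).add ((hq2.mul hq2).const_mul (1/2:ℝ))).add (hp1.mul hq2) |>.sub (hp2.mul hq1)
  obtain ⟨t, ht, ht0⟩ : ∃ t, Real.sqrt (x.1.1 ^ 2 + x.1.2 ^ 2) = t ∧ t ≠ 0 :=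
    ⟨_, rfl, hw⟩
  convert h1 using 1
  unfold DH
  refine ContinuousLinearMap.ext fun v => ?_
  simp only [ContinuousLinearMap.add_apply, ContinuousLinearMap.sub_apply,
    ContinuousLinearMap.smul_apply, ContinuousLinearMap.neg_apply, ContinuousLinearMap.comp_apply,
    ContinuousLinearMap.coe_fst', ContinuousLinearMap.coe_snd', smul_eq_mul]
  rw [ht]
  field_simp
  ring

lemma DH_apply (x v : (ℝ × ℝ) × (ℝ × ℝ)) :
    DH x v = (x.1.1 * ((Real.sqrt (x.1.1 ^ 2 + x.1.2 ^ 2))⁻¹) ^ 3 - 2 * x.1.1 - x.2.2) * v.1.1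
      + (x.1.2 * ((Real.sqrt (x.1.1 ^ 2 + x.1.2 ^ 2))⁻¹) ^ 3 + x.1.2 + x.2.1) * v.1.2
      + (x.2.1 + x.1.2) * v.2.1 + (x.2.2 - x.1.1) * v.2.2 := by
  simp [DH]

set_option maxHeartbeats 800000 in
/-- The set of critical points of Hill's lunar Hamiltonian (on `q ≠ 0`) is exactly
`{(3^{-1/3}, 0, 0, 3^{-1/3}), (-3^{-1/3}, 0, 0, -3^{-1/3})}` in coordinates
`(q₁, q₂, p₁, p₂)`, and `H` takes the value `-3^{4/3}/2` there. -/
theorem hill_hamiltonian_critical_points :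
    {x : (ℝ × ℝ) × (ℝ × ℝ) | x.1 ≠ 0 ∧ fderiv ℝ HHLP x = 0} =
      {((((3:ℝ) ^ (-(1:ℝ)/3), (0:ℝ)), ((0:ℝ), (3:ℝ) ^ (-(1:ℝ)/3))) : (ℝ × ℝ) × (ℝ × ℝ)),
       (((-(3:ℝ) ^ (-(1:ℝ)/3), (0:ℝ)), ((0:ℝ), -(3:ℝ) ^ (-(1:ℝ)/3))) : (ℝ × ℝ) × (ℝ × ℝ))} ∧
    HHLP (((3:ℝ) ^ (-(1:ℝ)/3), 0), (0, (3:ℝ) ^ (-(1:ℝ)/3))) = -(3:ℝ) ^ ((4:ℝ)/3) / 2 ∧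
    HHLP ((-(3:ℝ) ^ (-(1:ℝ)/3), 0), (0, -(3:ℝ) ^ (-(1:ℝ)/3))) = -(3:ℝ) ^ ((4:ℝ)/3) / 2 := by
  set k : ℝ := (3:ℝ) ^ (-(1:ℝ)/3) with hk
  have hk0 : 0 < k := Real.rpow_pos_of_pos (by norm_num) _
  have hk3 : k ^ (3:ℕ) = 1/3 := by
    rw [hk, ← Real.rpow_natCast ((3:ℝ) ^ (-(1:ℝ)/3)) 3, ← Real.rpow_mul (by norm_num)]
    norm_num
  have h43 : (3:ℝ) ^ ((4:ℝ)/3) = 3 / k := by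
    rw [hk, show ((4:ℝ)/3) = 1 - (-(1:ℝ)/3) by norm_num, Real.rpow_sub (by norm_num),
      Real.rpow_one]
  have hinv3 : (k⁻¹) ^ (3:ℕ) = 3 := by
    rw [inv_pow, hk3]; norm_num
  have hwk : Real.sqrt (k ^ 2 + 0 ^ 2) = k := by
    rw [show k ^ 2 + 0 ^ 2 = k ^ 2 by ring, Real.sqrt_sq hk0.le]
  have hwk' : Real.sqrt ((-k) ^ 2 + 0 ^ 2) = k := by
    rw [show (-k) ^ 2 + 0 ^ 2 = k ^ 2 by ring, Real.sqrt_sq hk0.le]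
  refine ⟨?_, ?_, ?_⟩
  · ext x
    obtain ⟨⟨a, b⟩, c, d⟩ := x
    simp only [Set.mem_setOf_eq, Set.mem_insert_iff, Set.mem_singleton_iff]
    constructor
    · rintro ⟨hx, hf⟩
      rw [(key _ hx).fderiv] at hf
      have e1 : (DH ((a, b), (c, d))) ((1, 0), (0, 0)) = 0 := by rw [hf]; simp
      have e2 : (DH ((a, b), (c, d))) ((0, 1), (0, 0)) = 0 := by rw [hf]; simp
      have e3 : (DH ((a, b), (c, d))) ((0, 0), (1, 0)) = 0 := by rw [hf]; simp
      have e4 : (DH ((a, b), (c, d))) ((0, 0), (0, 1)) = 0 := by rw [hf]; simp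
      rw [DH_apply] at e1 e2 e3 e4
      norm_num at e1 e2 e3 e4
      have hc : c = -b := by linarith
      have hd : d = a := by linarith
      have hwpos : 0 < Real.sqrt (a ^ 2 + b ^ 2) := by
        have hab : a ≠ 0 ∨ b ≠ 0 := by
          by_contra h; push_neg at h; exact hx (Prod.ext h.1 h.2)
        rcases hab with h | h
        · have : (0:ℝ) < a ^ 2 + b ^ 2 := by positivity
          positivity
        · have : (0:ℝ) < a ^ 2 + b ^ 2 := by positivity
          positivity
      have hupos : 0 < (Real.sqrt (a ^ 2 + b ^ 2) ^ 3)⁻¹ := by positivity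
      have hb : b = 0 := by
        rw [hc] at e2
        have hh : b * (Real.sqrt (a ^ 2 + b ^ 2) ^ 3)⁻¹ = 0 := by linarith
        rcases mul_eq_zero.1 hh with h | h
        · exact h
        · exact absurd h hupos.ne'
      have ha0 : a ≠ 0 := fun h => hx (Prod.ext h hb)
      have hw : Real.sqrt (a ^ 2 + b ^ 2) = |a| := by
        rw [hb]; simpa using Real.sqrt_sq_eq_abs a
      have hu3 : (|a| ^ 3)⁻¹ = 3 := by
        rw [hd, hw] at e1
        have ha3 : a * ((|a| ^ 3)⁻¹ - 3) = 0 := by linear_combination e1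
        rcases mul_eq_zero.1 ha3 with h | h
        · exact absurd h ha0
        · linarith
      have habs : |a| = k := by
        refine (Odd.strictMono_pow (R := ℝ) (by decide : Odd 3)).injective ?_
        have h1 : |a| ^ (3:ℕ) = 1/3 := by
          rw [← inv_inv (|a| ^ 3), hu3]; norm_num
        rw [h1, hk3]
      subst hc hd hb
      rcases (abs_eq hk0.le).1 habs with h | h
      · subst h; left; norm_num
      · subst h; right; norm_num
    · have hkx : ((k, 0) : ℝ × ℝ) ≠ 0 := fun h => hk0.ne' (congrArg Prod.fst h)
      have hkx' : ((-k, 0) : ℝ × ℝ) ≠ 0 := by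
        intro h
        have := congrArg Prod.fst h
        simp only at this
        exact hk0.ne' (by linarith [neg_eq_zero.1 this])
      rintro (h | h)
      · obtain ⟨⟨ha, hb⟩, hc, hd⟩ : (a = k ∧ b = 0) ∧ c = 0 ∧ d = k := by
          simpa [Prod.ext_iff] using h
        subst ha hb hc hd
        refine ⟨hkx, ?_⟩
        rw [(key _ hkx).fderiv]
        refine ContinuousLinearMap.ext fun v => ?_
        rw [DH_apply]
        simp only [ContinuousLinearMap.zero_apply]
        rw [hwk, hinv3]
        ring
      · obtain ⟨⟨ha, hb⟩, hc, hd⟩ : (a = -k ∧ b = 0) ∧ c = 0 ∧ d = -k := by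
          simpa [Prod.ext_iff] using h
        subst ha hb hc hd
        refine ⟨hkx', ?_⟩
        rw [(key _ hkx').fderiv]
        refine ContinuousLinearMap.ext fun v => ?_
        rw [DH_apply]
        simp only [ContinuousLinearMap.zero_apply]
        rw [hwk', hinv3]
        ring
  · show (1/2) * ((0:ℝ) ^ 2 + k ^ 2) - 1 / Real.sqrt (k ^ 2 + 0 ^ 2)
        - k ^ 2 + (1/2) * (0:ℝ) ^ 2 + 0 * 0 - k * k = -(3:ℝ) ^ ((4:ℝ)/3) / 2
    rw [hwk, h43]
    field_simp
    linear_combination (-3) * hk3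
  · show (1/2) * ((0:ℝ) ^ 2 + (-k) ^ 2) - 1 / Real.sqrt ((-k) ^ 2 + 0 ^ 2)
        - (-k) ^ 2 + (1/2) * (0:ℝ) ^ 2 + 0 * 0 - (-k) * (-k) = -(3:ℝ) ^ ((4:ℝ)/3) / 2
    rw [hwk', h43]
    field_simp
    linear_combination (-3) * hk3
end

section
/- For every b > 3^{4/3}/2 and every t ∈ (0,1], the cubic polynomial P(r) = (3/2)·t·r³ - b·r + 1 has exactly one negative real root and exactly two positive real roots, and the two positive roots are distinct. -/
set_option maxHeartbeats 2000000 in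
/-- For every `b > 3^{4/3}/2` and every `t ∈ (0,1]`, the cubic
`P(r) = (3/2)·t·r³ - b·r + 1` has exactly one negative real root and exactly two
positive real roots, and the two positive roots are distinct. -/
theorem cubic_root_structure (b t : ℝ) (hb : (3:ℝ) ^ ((4:ℝ)/3) / 2 < b)
    (ht : t ∈ Set.Ioc (0:ℝ) 1) :
    (∃! r : ℝ, r < 0 ∧ (3/2) * t * r ^ 3 - b * r + 1 = 0) ∧
    (∃ r₁ r₂ : ℝ, 0 < r₁ ∧ r₁ < r₂ ∧
      (3/2) * t * r₁ ^ 3 - b * r₁ + 1 = 0 ∧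
      (3/2) * t * r₂ ^ 3 - b * r₂ + 1 = 0 ∧
      ∀ r : ℝ, 0 < r → (3/2) * t * r ^ 3 - b * r + 1 = 0 → r = r₁ ∨ r = r₂) := by
  obtain ⟨ht0, ht1⟩ := ht
  have hcpos : (0:ℝ) < (3:ℝ) ^ ((4:ℝ)/3) := Real.rpow_pos_of_pos (by norm_num) _
  have hb0 : 0 < b := lt_trans (by positivity) hb
  have hb3 : 81 < 8 * b ^ 3 := by
    have hc3 : ((3:ℝ) ^ ((4:ℝ)/3)) ^ (3:ℕ) = 81 := by
      rw [← Real.rpow_natCast ((3:ℝ) ^ ((4:ℝ)/3)) 3, ← Real.rpow_mul (by norm_num)]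
      norm_num
    have hlt : ((3:ℝ) ^ ((4:ℝ)/3) / 2) ^ (3:ℕ) < b ^ (3:ℕ) :=
      pow_lt_pow_left₀ hb (by positivity) (by norm_num)
    have : ((3:ℝ) ^ ((4:ℝ)/3) / 2) ^ (3:ℕ) = 81 / 8 := by
      rw [div_pow, hc3]; norm_num
    rw [this] at hlt
    linarith
  set F : ℝ → ℝ := fun r => (3/2) * t * r ^ 3 - b * r + 1 with hF
  obtain ⟨m, hm, hmsq⟩ : ∃ m : ℝ, 0 < m ∧ t * m ^ 2 = 2 * b / 9 := by
    refine ⟨Real.sqrt (2 * b / (9 * t)), Real.sqrt_pos.mpr (by positivity), ?_⟩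
    rw [Real.sq_sqrt (by positivity : (0:ℝ) ≤ 2 * b / (9 * t))]
    field_simp
  have hcont : Continuous F := by rw [hF]; fun_prop
  have hd : ∀ r : ℝ, HasDerivAt F ((9/2) * t * r ^ 2 - b) r := by
    intro r
    rw [hF]
    have h1 := (((hasDerivAt_pow 3 r).const_mul ((3:ℝ)/2 * t)).sub
      ((hasDerivAt_id r).const_mul b)).add_const 1
    exact h1.congr_deriv (by push_cast; ring)
  clear_value F
  -- key size fact : (2/3) b m > 1
  have hu : 1 < (2/3) * b * m := by
    have key : ((2/3) * b * m) ^ 2 * t = 8 * b ^ 3 / 81 := by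
      linear_combination (4/9) * b ^ 2 * hmsq
    have hu2 : 1 < ((2/3) * b * m) ^ 2 := by nlinarith [key, hb3, ht0, ht1]
    nlinarith [mul_pos hb0 hm]
  -- values of F at key points
  have hF0 : F 0 = 1 := by rw [hF]; norm_num
  have hFm : F m = 1 - (2/3) * b * m := by
    rw [hF]; simp only; linear_combination (3/2) * m * hmsq
  have hFnm : F (-m) = 1 + (2/3) * b * m := by
    rw [hF]; simp only; linear_combination (-(3/2)) * m * hmsq
  have hF3m : F (3 * m) = 6 * b * m + 1 := by
    rw [hF]; simp only; linear_combination (81/2) * m * hmsq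
  have hFn3m : F (-(3 * m)) = -(6 * b * m) + 1 := by
    rw [hF]; simp only; linear_combination (-(81/2)) * m * hmsq
  have hfm_neg : F m < 0 := by rw [hFm]; linarith
  have hfnm_pos : 0 < F (-m) := by rw [hFnm]; nlinarith [mul_pos hb0 hm]
  have hf3m : 0 < F (3 * m) := by rw [hF3m]; nlinarith [mul_pos hb0 hm]
  have hfn3m : F (-(3 * m)) < 0 := by rw [hFn3m]; linarith
  -- monotonicity
  have hmono : StrictMonoOn F (Set.Ici m) := by
    apply strictMonoOn_of_deriv_pos (convex_Ici m) hcont.continuousOn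
    intro x hx
    rw [interior_Ici] at hx
    rw [(hd x).deriv]
    have hxm : m < x := hx
    have hx2 : t * m ^ 2 < t * x ^ 2 := by
      nlinarith [mul_pos ht0 (mul_pos (sub_pos.mpr hxm) (show (0:ℝ) < x + m by linarith))]
    linarith [hmsq ▸ hx2]
  have hmono' : StrictMonoOn F (Set.Iic (-m)) := by
    apply strictMonoOn_of_deriv_pos (convex_Iic (-m)) hcont.continuousOn
    intro x hx
    rw [interior_Iic] at hx
    rw [(hd x).deriv]
    have hxm : x < -m := hx
    have hx2 : t * m ^ 2 < t * x ^ 2 := by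
      nlinarith [mul_pos ht0 (mul_pos_of_neg_of_neg (show x - m < 0 by linarith) (show x + m < 0 by linarith))]
    linarith [hmsq ▸ hx2]
  have hanti : StrictAntiOn F (Set.Icc (-m) m) := by
    apply strictAntiOn_of_deriv_neg (convex_Icc (-m) m) hcont.continuousOn
    intro x hx
    rw [interior_Icc] at hx
    rw [(hd x).deriv]
    obtain ⟨hx1, hx2⟩ := hx
    have hx3 : t * x ^ 2 < t * m ^ 2 := by
      nlinarith [mul_pos ht0 (mul_pos (show (0:ℝ) < m - x by linarith) (show (0:ℝ) < m + x by linarith))]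
    linarith [hmsq ▸ hx3]
  -- roots via IVT
  obtain ⟨rn, ⟨hrn1, hrn2⟩, hrn0⟩ : ∃ rn ∈ Set.Ioo (-(3*m)) (-m), F rn = 0 :=
    intermediate_value_Ioo (by linarith : -(3*m) ≤ -m) hcont.continuousOn ⟨hfn3m, hfnm_pos⟩
  obtain ⟨r₁, ⟨hr₁1, hr₁2⟩, hr₁0⟩ : ∃ r₁ ∈ Set.Ioo (0:ℝ) m, F r₁ = 0 :=
    intermediate_value_Ioo' (by linarith : (0:ℝ) ≤ m) hcont.continuousOn
      ⟨hfm_neg, by rw [hF0]; norm_num⟩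
  obtain ⟨r₂, ⟨hr₂1, hr₂2⟩, hr₂0⟩ : ∃ r₂ ∈ Set.Ioo m (3*m), F r₂ = 0 :=
    intermediate_value_Ioo (by linarith : m ≤ 3*m) hcont.continuousOn ⟨hfm_neg, hf3m⟩
  -- no roots in [-m, 0)
  have hnoroot_mid : ∀ s : ℝ, -m ≤ s → s < 0 → F s ≠ 0 := by
    intro s hs1 hs2 hs0
    have : F 0 < F s := hanti ⟨hs1, le_of_lt (lt_trans hs2 hm)⟩ ⟨by linarith, le_of_lt hm⟩ hs2
    rw [hF0, hs0] at this
    linarith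
  have hFr : ∀ r : ℝ, F r = (3/2) * t * r ^ 3 - b * r + 1 := fun r => by rw [hF]
  constructor
  · refine ⟨rn, ⟨by linarith, by rw [← hFr]; exact hrn0⟩, ?_⟩
    rintro s ⟨hs, hs0⟩
    rw [← hFr] at hs0
    by_cases hsm : s ≤ -m
    · exact hmono'.injOn hsm (le_of_lt hrn2) (by rw [hs0, hrn0])
    · exact absurd hs0 (hnoroot_mid s (by linarith) hs)
  · refine ⟨r₁, r₂, hr₁1, by linarith, by rw [← hFr]; exact hr₁0,
      by rw [← hFr]; exact hr₂0, ?_⟩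
    intro r hr hr0
    rw [← hFr] at hr0
    by_cases hrm : r ≤ m
    · left
      exact hanti.injOn ⟨by linarith, hrm⟩ ⟨by linarith, le_of_lt hr₁2⟩ (by rw [hr0, hr₁0])
    · right
      push_neg at hrm
      exact hmono.injOn (le_of_lt hrm) (le_of_lt hr₂1) (by rw [hr0, hr₂0])
end

section
/- For all p ∈ ℝ², all c > 3^{4/3}/2, all q₂ ∈ ℝ, and ε ∈ {1, -1}, one has p₁q₂ - ε·p₂·3^{-1/3} + (1/2)(p₁²+p₂²) + c > 3^{-2/3} - (1/2)q₂² + 1/√(q₂² + 3^{-2/3}). In other words, on the two vertical lines q₁ = ±3^{-1/3}, the affine function g_{p,c}(q) = p₁q₂ - p₂q₁ + (1/2)(p₁²+p₂²) + c is strictly larger than f(q) = q₁² - (1/2)q₂² + 1/√(q₁²+q₂²). -/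
/-- For all `p ∈ ℝ²`, `c > 3^{4/3}/2`, `q₂ ∈ ℝ` and `ε ∈ {1, -1}`:
`p₁q₂ - ε·p₂·3^{-1/3} + (1/2)(p₁²+p₂²) + c > 3^{-2/3} - (1/2)q₂² + 1/√(q₂² + 3^{-2/3})`,
i.e. on the vertical lines `q₁ = ±3^{-1/3}` the affine function `g_{p,c}` strictly
dominates `f(q) = q₁² - (1/2)q₂² + 1/√(q₁²+q₂²)`. -/
theorem g_dominates_f_on_vertical_lines (p : ℝ × ℝ) (c : ℝ)
    (hc : (3:ℝ) ^ ((4:ℝ)/3) / 2 < c) (q₂ : ℝ) (ε : ℝ) (hε : ε = 1 ∨ ε = -1) :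
    (3:ℝ) ^ (-(2:ℝ)/3) - (1/2) * q₂ ^ 2 + 1 / Real.sqrt (q₂ ^ 2 + (3:ℝ) ^ (-(2:ℝ)/3))
      < p.1 * q₂ - ε * p.2 * (3:ℝ) ^ (-(1:ℝ)/3) + (1/2) * (p.1 ^ 2 + p.2 ^ 2) + c := by
  set a : ℝ := (3:ℝ) ^ (-(1:ℝ)/3) with ha_def
  have ha : 0 < a := Real.rpow_pos_of_pos (by norm_num) _
  have hasq : a ^ 2 = (3:ℝ) ^ (-(2:ℝ)/3) := by
    rw [ha_def, ← Real.rpow_natCast _ 2, ← Real.rpow_mul (by norm_num)]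
    norm_num
  have hb : (3:ℝ) ^ ((1:ℝ)/3) = a⁻¹ := by
    rw [ha_def, ← Real.rpow_neg (by norm_num)]
    norm_num
  have hba : (3:ℝ) ^ ((1:ℝ)/3) * a = 1 := by
    rw [hb]; field_simp
  have h43 : (3:ℝ) ^ ((4:ℝ)/3) = 3 * (3:ℝ) ^ ((1:ℝ)/3) := by
    rw [← Real.rpow_one_add' (by norm_num) (by norm_num)]
    norm_num
  have ha3 : a ^ 3 = (3:ℝ)⁻¹ := by
    rw [ha_def, ← Real.rpow_natCast _ 3, ← Real.rpow_mul (by norm_num)]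
    norm_num
  have key : 3 * a ^ 2 = (3:ℝ) ^ ((1:ℝ)/3) := by
    rw [hb, inv_eq_one_div, eq_div_iff ha.ne']
    rw [show 3 * a ^ 2 * a = 3 * a ^ 3 from by ring, ha3]
    norm_num
  have hsqrt : a ≤ Real.sqrt (q₂ ^ 2 + (3:ℝ) ^ (-(2:ℝ)/3)) := by
    rw [Real.le_sqrt' ha, ← hasq]
    nlinarith [sq_nonneg q₂]
  have hspos : 0 < Real.sqrt (q₂ ^ 2 + (3:ℝ) ^ (-(2:ℝ)/3)) := lt_of_lt_of_le ha hsqrt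
  have hinv : 1 / Real.sqrt (q₂ ^ 2 + (3:ℝ) ^ (-(2:ℝ)/3)) ≤ (3:ℝ) ^ ((1:ℝ)/3) := by
    rw [hb, ← one_div]
    exact one_div_le_one_div_of_le ha hsqrt
  have hε2 : ε ^ 2 = 1 := by rcases hε with h | h <;> simp [h]
  nlinarith [sq_nonneg (p.1 + q₂), sq_nonneg (p.2 - ε * a), sq_nonneg a, key, hasq, h43, hc, hinv, hε2]
end

section
/- Let A, B, φ, μ ∈ ℝ with 2|A| < |B|. Then the equation A·sin(2α + φ) + B·sin(α + μ) = 0 has exactly two solutions α in the interval [0, 2π). -/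
open Real Set Filter Topology

lemma slope_right {h : ℝ → ℝ} {d u m : ℝ} (hd : HasDerivAt h d u) (hneg : d < 0)
    (hum : u < m) : ∃ x, u < x ∧ x < m ∧ h x < h u := by
  have ht : Tendsto (slope h u) (𝓝[≠] u) (𝓝 d) := hasDerivAt_iff_tendsto_slope.mp hd
  have h1 : ∀ᶠ x in 𝓝[≠] u, slope h u x < 0 := ht.eventually_lt_const hneg
  have h2 : ∀ᶠ x in 𝓝[>] u, slope h u x < 0 :=
    h1.filter_mono (nhdsWithin_mono u (fun x hx => ne_of_gt hx))
  have h3 : Ioo u m ∈ 𝓝[>] u := Ioo_mem_nhdsGT_of_mem ⟨le_refl _, hum⟩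
  obtain ⟨x, hx1, hx2⟩ := (h2.and h3).exists
  refine ⟨x, hx2.1, hx2.2, ?_⟩
  rw [slope_def_field] at hx1
  have hxu : 0 < x - u := by linarith [hx2.1]
  rcases div_neg_iff.mp hx1 with ⟨_, h⟩ | ⟨h, _⟩ <;> linarith

lemma slope_left {h : ℝ → ℝ} {d u m : ℝ} (hd : HasDerivAt h d u) (hneg : d < 0)
    (hum : m < u) : ∃ x, m < x ∧ x < u ∧ h u < h x := by
  have ht : Tendsto (slope h u) (𝓝[≠] u) (𝓝 d) := hasDerivAt_iff_tendsto_slope.mp hd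
  have h1 : ∀ᶠ x in 𝓝[≠] u, slope h u x < 0 := ht.eventually_lt_const hneg
  have h2 : ∀ᶠ x in 𝓝[<] u, slope h u x < 0 :=
    h1.filter_mono (nhdsWithin_mono u (fun x hx => ne_of_lt hx))
  have h3 : Ioo m u ∈ 𝓝[<] u := Ioo_mem_nhdsLT_of_mem ⟨hum, le_refl _⟩
  obtain ⟨x, hx1, hx2⟩ := (h2.and h3).exists
  refine ⟨x, hx2.1, hx2.2, ?_⟩
  rw [slope_def_field] at hx1
  have hxu : x - u < 0 := by linarith [hx2.2]
  rcases div_neg_iff.mp hx1 with ⟨_, h⟩ | ⟨h, _⟩ <;> linarith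

lemma uniq_zero {h : ℝ → ℝ} {a b : ℝ} (hcont : Continuous h)
    (hderiv : ∀ x ∈ Ioo a b, h x = 0 → ∃ d, HasDerivAt h d x ∧ d < 0)
    {z w : ℝ} (hz : z ∈ Ioo a b) (hw : w ∈ Ioo a b) (hz0 : h z = 0) (hw0 : h w = 0) :
    z = w := by
  -- WLOG z ≤ w
  wlog hzw : z ≤ w generalizing z w
  · exact (this hw hz hw0 hz0 (le_of_not_ge hzw)).symm
  rcases eq_or_lt_of_le hzw with h' | hlt
  · exact h'
  exfalso
  -- derivative at w is negative, so h > 0 slightly left of w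
  obtain ⟨dw, hdw, hdwneg⟩ := hderiv w hw hw0
  obtain ⟨m, hm1, hm2, hm3⟩ := slope_left hdw hdwneg hlt
  rw [hw0] at hm3
  -- u : last zero in [z, m]
  set S : Set ℝ := {x ∈ Icc z m | h x = 0} with hS
  have hSz : z ∈ S := ⟨⟨le_refl _, hm1.le⟩, hz0⟩
  have hSc : IsClosed S := isClosed_Icc.inter (isClosed_singleton.preimage hcont)
  have hSb : BddAbove S := BddAbove.mono (fun x hx => hx.1) bddAbove_Icc
  have huS : sSup S ∈ S := hSc.csSup_mem ⟨z, hSz⟩ hSb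
  set u := sSup S with hu
  have hu0 : h u = 0 := huS.2
  have hum : u < m := lt_of_le_of_ne huS.1.2 (fun e => by rw [e] at hu0; linarith)
  have hupos : ∀ x, u < x → x ≤ m → 0 < h x := by
    intro x hx1 hx2
    rcases lt_trichotomy (h x) 0 with hneg | hzero | hpos
    · -- IVT between x and m gives a zero > u, contradiction
      obtain ⟨y, hy1, hy2⟩ := intermediate_value_Icc hx2 (hcont.continuousOn)
        (show (0:ℝ) ∈ Icc (h x) (h m) from ⟨hneg.le, hm3.le⟩)
      have : y ∈ S := ⟨⟨by linarith [huS.1.1, hy1.1], hy1.2⟩, hy2⟩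
      have := le_csSup hSb this
      linarith [hy1.1]
    · exfalso
      have : x ∈ S := ⟨⟨by linarith [huS.1.1], hx2⟩, hzero⟩
      have := le_csSup hSb this
      linarith
    · exact hpos
  -- u is a zero in (a,b) with negative derivative ⇒ h < 0 just right of u
  have huab : u ∈ Ioo a b := ⟨lt_of_lt_of_le hz.1 (le_csSup hSb hSz), by
    have := hw.2; linarith⟩
  obtain ⟨du, hdu, hduneg⟩ := hderiv u huab hu0
  obtain ⟨x, hx1, hx2, hx3⟩ := slope_right hdu hduneg hum
  rw [hu0] at hx3
  exact absurd (hupos x hx1 hx2.le) (by linarith)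

lemma key_s11 (A B c : ℝ) (hB : 2 * |A| < B) :
    ∃ z1 z2 : ℝ, (∀ k : ℤ, z1 - z2 ≠ 2 * π * k) ∧
      ∀ β : ℝ, (B * Real.sin β + A * Real.sin (2 * β + c) = 0 ↔
        (∃ k : ℤ, β = z1 + 2 * π * k) ∨ (∃ k : ℤ, β = z2 + 2 * π * k)) := by
  have hBpos : 0 < B := lt_of_le_of_lt (by positivity) hB
  have hπ := Real.pi_pos
  set h : ℝ → ℝ := fun β => B * Real.sin β + A * Real.sin (2 * β + c) with hhdef
  have hcont : Continuous h := by fun_prop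
  have hder : ∀ β, HasDerivAt h (B * Real.cos β + A * (Real.cos (2*β+c) * 2)) β := by
    intro β
    have h1 : HasDerivAt (fun x : ℝ => 2 * x + c) 2 β := by
      simpa using ((hasDerivAt_id β).const_mul 2).add_const c
    have h2 : HasDerivAt (fun x : ℝ => Real.sin (2*x+c)) (Real.cos (2*β+c) * 2) β :=
      h1.sin
    exact ((Real.hasDerivAt_sin β).const_mul B).add (h2.const_mul A)
  have hper : Function.Periodic h (2*π) := by
    intro x
    simp only [hhdef]
    rw [show 2*(x+2*π)+c = (2*x+c)+2*π+2*π by ring, Real.sin_add_two_pi,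
      Real.sin_add_two_pi, Real.sin_add_two_pi]
  -- values at sample points
  have v1 : 0 < h (π/2) := by
    simp only [hhdef]
    rw [Real.sin_pi_div_two]
    have h1 := neg_abs_le (A * Real.sin (2*(π/2)+c))
    have h2 : |A * Real.sin (2*(π/2)+c)| ≤ |A| := by
      rw [abs_mul]
      nlinarith [abs_nonneg A, Real.abs_sin_le_one (2*(π/2)+c), abs_nonneg (Real.sin (2*(π/2)+c))]
    linarith
  have v2 : h (3*π/2) < 0 := by
    simp only [hhdef]
    rw [show (3*π/2 : ℝ) = π/2 + π by ring, Real.sin_add_pi, Real.sin_pi_div_two]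
    have h1 := le_abs_self (A * Real.sin (2*(π/2+π)+c))
    have h2 : |A * Real.sin (2*(π/2+π)+c)| ≤ |A| := by
      rw [abs_mul]
      nlinarith [abs_nonneg A, Real.abs_sin_le_one (2*(π/2+π)+c), abs_nonneg (Real.sin (2*(π/2+π)+c))]
    linarith
  have v3 : 0 < h (5*π/2) := by
    rw [show (5*π/2 : ℝ) = π/2 + 2*π by ring, hper]
    exact v1
  -- existence of zeros
  obtain ⟨z1, hz1mem, hz1⟩ := intermediate_value_Ioo' (by linarith : (π/2:ℝ) ≤ 3*π/2)
    hcont.continuousOn (show (0:ℝ) ∈ Ioo (h (3*π/2)) (h (π/2)) from ⟨v2, v1⟩)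
  obtain ⟨z2, hz2mem, hz2⟩ := intermediate_value_Ioo (by linarith : (3*π/2:ℝ) ≤ 5*π/2)
    hcont.continuousOn (show (0:ℝ) ∈ Ioo (h (3*π/2)) (h (5*π/2)) from ⟨v2, v3⟩)
  -- derivative sign at zeros
  have h4 : 4*A^2 < B^2 := by nlinarith [abs_nonneg A, sq_abs A]
  have hsign : ∀ x : ℝ, h x = 0 →
      (2*A*(Real.cos (2*x+c)))^2 < (B * Real.cos x)^2 := by
    intro x hx0
    have e1 : Real.sin x ^2 + Real.cos x ^2 = 1 := Real.sin_sq_add_cos_sq x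
    have e2 : Real.sin (2*x+c) ^2 + Real.cos (2*x+c) ^2 = 1 := Real.sin_sq_add_cos_sq _
    have e0 : B * Real.sin x + A * Real.sin (2*x+c) = 0 := hx0
    have esq : (A * Real.sin (2*x+c))^2 = (B * Real.sin x)^2 := by
      have : A * Real.sin (2*x+c) = -(B * Real.sin x) := by linarith
      rw [this]; ring
    nlinarith [sq_nonneg (B * Real.sin x), esq, e1, e2]
  have hderivneg : ∀ x ∈ Ioo (π/2) (3*π/2), h x = 0 → ∃ d, HasDerivAt h d x ∧ d < 0 := by
    intro x hx hx0
    refine ⟨_, hder x, ?_⟩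
    have hco : Real.cos x < 0 :=
      Real.cos_neg_of_pi_div_two_lt_of_lt hx.1 (by have := hx.2; linarith)
    have hbc : B * Real.cos x < 0 := mul_neg_of_pos_of_neg hBpos hco
    nlinarith [hsign x hx0]
  have hderivpos : ∀ x ∈ Ioo (3*π/2) (5*π/2), h x = 0 → ∃ d, HasDerivAt h d x ∧ 0 < d := by
    intro x hx hx0
    refine ⟨_, hder x, ?_⟩
    have hco : 0 < Real.cos x := by
      rw [show x = (x - 2*π) + 2*π by ring, Real.cos_add_two_pi]
      exact Real.cos_pos_of_mem_Ioo ⟨by have := hx.1; linarith, by have := hx.2; linarith⟩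
    have hbc : 0 < B * Real.cos x := mul_pos hBpos hco
    nlinarith [hsign x hx0]
  -- uniqueness in each arc
  have huniq1 : ∀ z ∈ Ioo (π/2) (3*π/2), h z = 0 → z = z1 := fun z hzm hz0 =>
    uniq_zero hcont hderivneg hzm hz1mem hz0 hz1
  have huniq2 : ∀ z ∈ Ioo (3*π/2) (5*π/2), h z = 0 → z = z2 := by
    intro z hzm hz0
    refine uniq_zero (h := fun x => -(h x)) hcont.neg ?_ hzm hz2mem
      (by simp [hz0]) (by simp [hz2])
    intro x hx hx0
    obtain ⟨d, hd, hdpos⟩ := hderivpos x hx (by simpa using hx0)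
    exact ⟨-d, hd.neg, by linarith⟩
  refine ⟨z1, z2, ?_, ?_⟩
  · intro k hk
    rcases le_or_gt 0 k with hk0 | hk0
    · have hkr : (0:ℝ) ≤ (k:ℝ) := by exact_mod_cast hk0
      have : (0:ℝ) ≤ 2*π*k := by nlinarith
      have hb1 := hz1mem.2
      have hb2 := hz2mem.1
      linarith
    · have hkr : (k:ℝ) ≤ -1 := by exact_mod_cast Int.le_sub_one_of_lt hk0
      have : 2*π*(k:ℝ) ≤ 2*π*(-1) := by nlinarith
      have hb1 := hz1mem.1
      have hb2 := hz2mem.2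
      linarith
  · intro β
    constructor
    · intro hβ0
      have tp : (0:ℝ) < 2*π := Real.two_pi_pos
      set β' := toIcoMod tp (π/2) β with hb'
      have hmem : β' ∈ Ico (π/2) (π/2 + 2*π) := toIcoMod_mem_Ico tp (π/2) β
      have hk : β' + toIcoDiv tp (π/2) β • (2*π) = β := toIcoMod_add_toIcoDiv_zsmul tp (π/2) β
      set k := toIcoDiv tp (π/2) β with hkdef
      have hβ'' : h (β' + (k:ℝ) * (2*π)) = 0 := by
        rw [show β' + (k:ℝ)*(2*π) = β' + k • (2*π) by rw [zsmul_eq_mul], hk]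
        exact hβ0
      have hβ' : h β' = 0 := by rw [← (hper.int_mul k) β']; exact hβ''
      have hne1 : β' ≠ π/2 := fun e => by rw [e] at hβ'; linarith
      have hne2 : β' ≠ 3*π/2 := fun e => by rw [e] at hβ'; linarith
      have hub : β' < 5*π/2 := by have := hmem.2; linarith
      rcases lt_or_gt_of_ne hne2 with hc | hc
      · left
        have hez : β' = z1 := huniq1 β' ⟨lt_of_le_of_ne hmem.1 (Ne.symm hne1), hc⟩ hβ'
        exact ⟨k, by rw [← hk, hez, zsmul_eq_mul]; ring⟩
      · right
        have hez : β' = z2 := huniq2 β' ⟨hc, hub⟩ hβ'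
        exact ⟨k, by rw [← hk, hez, zsmul_eq_mul]; ring⟩
    · rintro (⟨k, rfl⟩ | ⟨k, rfl⟩)
      · show h _ = 0
        rw [show z1 + 2*π*(k:ℝ) = z1 + (k:ℝ)*(2*π) by ring, (hper.int_mul k) z1]
        exact hz1
      · show h _ = 0
        rw [show z2 + 2*π*(k:ℝ) = z2 + (k:ℝ)*(2*π) by ring, (hper.int_mul k) z2]
        exact hz2

lemma count_two (μ z1 z2 : ℝ) (hsep : ∀ k : ℤ, z1 - z2 ≠ 2*π*k) (P : ℝ → Prop)
    (hP : ∀ β, P β ↔ (∃ k : ℤ, β = z1 + 2*π*k) ∨ (∃ k : ℤ, β = z2 + 2*π*k)) :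
    {α ∈ Ico (0:ℝ) (2*π) | P (α + μ)}.ncard = 2 := by
  have tp : (0:ℝ) < 2*π := Real.two_pi_pos
  set a1 := toIcoMod tp 0 (z1 - μ) with ha1
  set a2 := toIcoMod tp 0 (z2 - μ) with ha2
  have keyrep : ∀ z : ℝ, ∀ α ∈ Ico (0:ℝ) (2*π),
      ((∃ k : ℤ, α + μ = z + 2*π*k) ↔ α = toIcoMod tp 0 (z - μ)) := by
    intro z α hα
    constructor
    · rintro ⟨k, hk⟩
      symm
      rw [toIcoMod_eq_iff tp]
      refine ⟨by simpa using hα, ⟨-k, ?_⟩⟩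
      push_cast [zsmul_eq_mul]
      linarith
    · intro hα'
      obtain ⟨_, k, hk⟩ := (toIcoMod_eq_iff tp).mp hα'.symm
      refine ⟨-k, ?_⟩
      push_cast [zsmul_eq_mul] at hk ⊢
      linarith
  have hrep : ∀ z : ℝ, ∃ k : ℤ, (toIcoMod tp 0 (z - μ)) + μ = z + 2*π*k := by
    intro z
    have hm : toIcoMod tp 0 (z - μ) ∈ Ico (0:ℝ) (2*π) := by
      simpa using toIcoMod_mem_Ico tp 0 (z - μ)
    obtain ⟨_, k, hk⟩ := (toIcoMod_eq_iff tp).mp (rfl : toIcoMod tp 0 (z-μ) = toIcoMod tp 0 (z-μ))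
    refine ⟨-k, ?_⟩
    push_cast [zsmul_eq_mul] at hk ⊢
    linarith
  have hset : {α ∈ Ico (0:ℝ) (2*π) | P (α + μ)} = {a1, a2} := by
    ext α
    simp only [Set.mem_sep_iff, Set.mem_insert_iff, Set.mem_singleton_iff]
    constructor
    · rintro ⟨hα, hPα⟩
      rcases (hP _).mp hPα with h1 | h2
      · exact Or.inl ((keyrep z1 α hα).mp h1)
      · exact Or.inr ((keyrep z2 α hα).mp h2)
    · rintro (rfl | rfl)
      · have hm : a1 ∈ Ico (0:ℝ) (2*π) := by simpa using toIcoMod_mem_Ico tp 0 (z1 - μ)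
        exact ⟨hm, (hP _).mpr (Or.inl (hrep z1))⟩
      · have hm : a2 ∈ Ico (0:ℝ) (2*π) := by simpa using toIcoMod_mem_Ico tp 0 (z2 - μ)
        exact ⟨hm, (hP _).mpr (Or.inr (hrep z2))⟩
  rw [hset]
  refine Set.ncard_pair ?_
  intro he
  obtain ⟨k1, hk1⟩ := hrep z1
  obtain ⟨k2, hk2⟩ := hrep z2
  rw [← ha1, he, ha2] at hk1
  refine hsep (k2 - k1) ?_
  push_cast
  linarith

/-- If `2|A| < |B|`, then the equation `A·sin(2α + φ) + B·sin(α + μ) = 0` has exactly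
two solutions `α` in `[0, 2π)`. -/
theorem two_solutions_of_trig_equation (A B φ μ : ℝ) (h : 2 * |A| < |B|) :
    {α ∈ Set.Ico (0:ℝ) (2 * Real.pi) |
      A * Real.sin (2 * α + φ) + B * Real.sin (α + μ) = 0}.ncard = 2 := by
  rcases lt_trichotomy B 0 with hB | hB | hB
  · obtain ⟨z1, z2, hsep, hiff⟩ := key_s11 (-A) (-B) (φ - 2*μ)
      (by rw [abs_neg]; rwa [abs_of_neg hB] at h)
    have hsets : {α ∈ Set.Ico (0:ℝ) (2 * Real.pi) |
        A * Real.sin (2 * α + φ) + B * Real.sin (α + μ) = 0}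
        = {α ∈ Ico (0:ℝ) (2*π) |
            (-B) * Real.sin (α + μ) + (-A) * Real.sin (2*(α + μ) + (φ - 2*μ)) = 0} := by
      ext α
      simp only [Set.mem_sep_iff]
      rw [show 2*(α+μ)+(φ-2*μ) = 2*α+φ by ring]
      constructor
      · rintro ⟨h1, h2⟩; exact ⟨h1, by linarith⟩
      · rintro ⟨h1, h2⟩; exact ⟨h1, by linarith⟩
    rw [hsets]
    exact count_two μ z1 z2 hsep
      (fun β => (-B) * Real.sin β + (-A) * Real.sin (2*β + (φ - 2*μ)) = 0) hiff
  · exfalso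
    rw [hB] at h
    simp only [abs_zero] at h
    linarith [abs_nonneg A]
  · obtain ⟨z1, z2, hsep, hiff⟩ := key_s11 A B (φ - 2*μ) (by rwa [abs_of_pos hB] at h)
    have hsets : {α ∈ Set.Ico (0:ℝ) (2 * Real.pi) |
        A * Real.sin (2 * α + φ) + B * Real.sin (α + μ) = 0}
        = {α ∈ Ico (0:ℝ) (2*π) |
            B * Real.sin (α + μ) + A * Real.sin (2*(α + μ) + (φ - 2*μ)) = 0} := by
      ext α
      simp only [Set.mem_sep_iff]
      rw [show 2*(α+μ)+(φ-2*μ) = 2*α+φ by ring]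
      constructor
      · rintro ⟨h1, h2⟩; exact ⟨h1, by linarith⟩
      · rintro ⟨h1, h2⟩; exact ⟨h1, by linarith⟩
    rw [hsets]
    exact count_two μ z1 z2 hsep
      (fun β => B * Real.sin β + A * Real.sin (2*β + (φ - 2*μ)) = 0) hiff
end
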